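/- Let F be a finite set of ℝ-linear functionals on ℝ^n and let a, b, c ∈ ℝ^n. Then there exists ε₀ > 0 such that for all 0 < ε < ε₀ and all f ∈ F: sgn(f(b + εa + ε²c)) = op(sgn(f(b)), op(sgn(f(a)), sgn(f(c)))) = op(op(sgn(f(b)), sgn(f(a))), sgn(f(c))), where op : SignType × SignType → SignType is defined by op(s, t) = s if s ≠ 0 and op(0, t) = t. In particular, the Tits product of faces is associative: (B ∘ A) ∘ C = B ∘ (A ∘ C). -/
import Mathlib

open Filter Topology

def titsOp (s t : SignType) : SignType := if s = 0 then t else s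

lemma titsOp_assoc : ∀ s t u : SignType, titsOp (titsOp s t) u = titsOp s (titsOp t u) := by
  decide

lemma sign_add_of_abs_lt {x u : ℝ} (h : |u| < |x|) :
    SignType.sign (x + u) = SignType.sign x := by
  rcases lt_trichotomy x 0 with hx | hx | hx
  · rw [sign_neg hx, sign_neg]
    have := abs_lt.1 h
    nlinarith [abs_nonneg u, neg_abs_le u, abs_of_neg hx]
  · exfalso; rw [hx, abs_zero] at h; exact (abs_nonneg u).not_gt h
  · rw [sign_pos hx, sign_pos]
    have := abs_lt.1 h
    nlinarith [abs_of_pos hx]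

lemma key (x y z : ℝ) :
    ∀ᶠ ε in 𝓝[>] (0:ℝ), SignType.sign (x + ε * y + ε ^ 2 * z) =
      titsOp (SignType.sign x) (titsOp (SignType.sign y) (SignType.sign z)) := by
  have hpos : ∀ᶠ ε in 𝓝[>] (0:ℝ), 0 < ε := self_mem_nhdsWithin
  by_cases hx : x = 0
  · by_cases hy : y = 0
    · subst hx; subst hy
      filter_upwards [hpos] with ε hε
      have : SignType.sign (ε ^ 2) = 1 := sign_pos (by positivity)
      simp [titsOp, sign_mul, this]
    · -- x = 0, y ≠ 0
      subst hx
      have ht : Tendsto (fun ε : ℝ => ε * z) (𝓝[>] 0) (𝓝 0) := by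
        have : Tendsto (fun ε : ℝ => ε * z) (𝓝 0) (𝓝 (0 * z)) :=
          (continuous_id.mul continuous_const).tendsto 0
        simpa using this.mono_left nhdsWithin_le_nhds
      have habs : ∀ᶠ ε in 𝓝[>] (0:ℝ), |ε * z| < |y| := by
        have := ht.abs
        simp only [abs_zero] at this
        exact this.eventually_lt_const (abs_pos.2 hy)
      filter_upwards [hpos, habs] with ε hε hlt
      have h1 : (0:ℝ) + ε * y + ε ^ 2 * z = ε * (y + ε * z) := by ring
      rw [h1, sign_mul, sign_pos hε, one_mul, sign_add_of_abs_lt]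
      · simp [titsOp, hy]
      · simpa [abs_mul] using hlt
  · have ht : Tendsto (fun ε : ℝ => ε * y + ε ^ 2 * z) (𝓝[>] 0) (𝓝 0) := by
      have : Tendsto (fun ε : ℝ => ε * y + ε ^ 2 * z) (𝓝 0) (𝓝 (0 * y + 0 ^ 2 * z)) := by
        exact ((continuous_id.mul continuous_const).add
          ((continuous_id.pow 2).mul continuous_const)).tendsto 0
      simpa using this.mono_left nhdsWithin_le_nhds
    have habs : ∀ᶠ ε in 𝓝[>] (0:ℝ), |ε * y + ε ^ 2 * z| < |x| := by
      have := ht.abs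
      simp only [abs_zero] at this
      exact this.eventually_lt_const (abs_pos.2 hx)
    filter_upwards [habs] with ε hlt
    rw [add_assoc, sign_add_of_abs_lt hlt]
    have : SignType.sign x ≠ 0 := by simp [hx]
    simp [titsOp, this]

/-- associativity of the Tits product: for small `ε > 0`,
`sgn(f(b + εa + ε²c)) = op(sgn f b, op(sgn f a, sgn f c)) = op(op(sgn f b, sgn f a), sgn f c)`. -/
theorem tits_product_assoc (n : ℕ)
    (F : Set ((Fin n → ℝ) →ₗ[ℝ] ℝ)) (hFfin : F.Finite)
    (a b c : Fin n → ℝ) :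
    ∃ ε₀ > (0 : ℝ), ∀ ε : ℝ, 0 < ε → ε < ε₀ → ∀ f ∈ F,
      SignType.sign (f (b + ε • a + ε ^ 2 • c)) =
          titsOp (SignType.sign (f b)) (titsOp (SignType.sign (f a)) (SignType.sign (f c))) ∧
      SignType.sign (f (b + ε • a + ε ^ 2 • c)) =
          titsOp (titsOp (SignType.sign (f b)) (SignType.sign (f a))) (SignType.sign (f c)) := by
  have hev : ∀ᶠ ε in 𝓝[>] (0:ℝ), ∀ f ∈ F,
      SignType.sign (f (b + ε • a + ε ^ 2 • c)) =
          titsOp (SignType.sign (f b)) (titsOp (SignType.sign (f a)) (SignType.sign (f c))) ∧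
      SignType.sign (f (b + ε • a + ε ^ 2 • c)) =
          titsOp (titsOp (SignType.sign (f b)) (SignType.sign (f a))) (SignType.sign (f c)) := by
    rw [hFfin.eventually_all]
    intro f hf
    filter_upwards [key (f b) (f a) (f c)] with ε hε
    have hval : f (b + ε • a + ε ^ 2 • c) = f b + ε * f a + ε ^ 2 * f c := by
      simp [map_add, map_smul, smul_eq_mul]
    rw [hval]
    exact ⟨hε, by rw [hε, titsOp_assoc]⟩
  rcases mem_nhdsGT_iff_exists_Ioo_subset.1 hev with ⟨u, hu, hsub⟩
  exact ⟨u, hu, fun ε hε hεu => hsub ⟨hε, hεu⟩⟩
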